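/- Suppose f : ℂ → ℂ is analytic on an open set containing the closed Bernstein ellipse region E_ρ (ρ > 1) with |f(z)| ≤ M there, and f(x) = Σ_{k≥0} a_k T_k(x) for x ∈ [−1,1]. Then |a_k| ≤ 2M ρ^{−k} for all k ≥ 1. -/

import Mathlib

open Complex

/-- The closed region bounded by the Bernstein ellipse `E_ρ`: the image of the
closed annulus `1 ≤ r ≤ ρ` under the Joukowski map. -/
def bernsteinRegion (ρ : ℝ) : Set ℂ :=
  {w : ℂ | ∃ r : ℝ, ∃ θ : ℝ, 1 ≤ r ∧ r ≤ ρ ∧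
    w = ((r : ℂ) * Complex.exp (θ * Complex.I) + (r : ℂ)⁻¹ * Complex.exp (-(θ * Complex.I))) / 2}

section Aux

open Real MeasureTheory

lemma exp_int_integral (m : ℤ) :
    (∫ θ : ℝ in (0:ℝ)..(2*π), Complex.exp (m * θ * I)) = if m = 0 then (2*π : ℂ) else 0 := by
  split_ifs with hm
  · subst hm; simp
  · have hc : (m : ℂ) * I ≠ 0 := by
      simp [Complex.ext_iff, hm]
    have key := integral_exp_mul_complex (a := (0:ℝ)) (b := 2*π) (c := (m : ℂ) * I) hc
    have heq : ∀ θ : ℝ, (m : ℂ) * I * θ = m * θ * I := by intro θ; ring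
    simp only [heq] at key
    rw [key]
    have h1 : Complex.exp ((m:ℂ) * ((2:ℝ)*π : ℝ) * I) = 1 := by
      rw [show (m:ℂ) * ((2:ℝ)*π : ℝ) * I = m * (2 * π * I) by push_cast; ring]
      exact Complex.exp_int_mul_two_pi_mul_I m
    rw [h1, show (m:ℂ) * ((0:ℝ):ℂ) * I = 0 by push_cast; ring]
    simp

lemma term_integral (j k : ℕ) (hk : 1 ≤ k) :
    (∫ θ : ℝ in (0:ℝ)..(2*π), Complex.cos (j * θ) * Complex.exp (-(k * θ * I)))
      = if j = k then (π : ℂ) else 0 := by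
  have hint : ∀ m : ℤ, IntervalIntegrable (fun θ : ℝ => Complex.exp (m * θ * I))
      MeasureTheory.volume 0 (2*π) := by
    intro m
    apply Continuous.intervalIntegrable
    fun_prop
  have heq : ∀ θ : ℝ, Complex.cos (j * θ) * Complex.exp (-(k * θ * I))
      = (Complex.exp ((((j:ℤ) - k : ℤ) : ℂ) * θ * I) +
         Complex.exp (((-(j:ℤ) - k : ℤ) : ℂ) * θ * I)) / 2 := by
    intro θ
    rw [Complex.cos, div_mul_eq_mul_div, add_mul, ← Complex.exp_add, ← Complex.exp_add]
    push_cast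
    ring_nf
  simp only [heq]
  rw [intervalIntegral.integral_div, intervalIntegral.integral_add (hint _) (hint _),
    exp_int_integral, exp_int_integral]
  have h2 : ¬((-(j:ℤ) - k : ℤ) = 0) := by omega
  rw [if_neg h2]
  by_cases hjk : j = k
  · subst hjk
    rw [if_pos (by omega), if_pos rfl]
    ring
  · rw [if_neg (by omega), if_neg hjk]
    simp

lemma joukowski_mem (ρ : ℝ) (z : ℂ) (h1 : 1 ≤ ‖z‖) (h2 : ‖z‖ ≤ ρ) :
    (z + z⁻¹) / 2 ∈ bernsteinRegion ρ := by
  refine ⟨‖z‖, Complex.arg z, h1, h2, ?_⟩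
  have hz : (‖z‖ : ℂ) * Complex.exp (Complex.arg z * I) = z :=
    Complex.norm_mul_exp_arg_mul_I z
  have hne : (‖z‖ : ℂ) ≠ 0 := by
    simp only [ne_eq, Complex.ofReal_eq_zero]
    intro h; rw [h] at h1; linarith
  rw [Complex.exp_neg, ← mul_inv, hz]

lemma coeff_integral (f : ℂ → ℂ) (a : ℕ → ℂ)
    (habs : Summable fun j => ‖a j‖)
    (hg : ∀ θ : ℝ, HasSum (fun j : ℕ => a j * Complex.cos (j * θ)) (f (Real.cos θ)))
    (k : ℕ) (hk : 1 ≤ k) :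
    (∫ θ : ℝ in (0:ℝ)..(2*π), f (Real.cos θ) * Complex.exp (-(k * θ * I)))
      = π * a k := by
  set μ : Measure ℝ := volume.restrict (Set.Ioc (0:ℝ) (2*π)) with hμ
  set F : ℕ → ℝ → ℂ := fun j θ => a j * Complex.cos (j * θ) * Complex.exp (-(k * θ * I))
    with hF
  have hcont : ∀ j : ℕ, Continuous (F j) := by
    intro j; fun_prop
  have hF_int : ∀ j : ℕ, Integrable (F j) μ := by
    intro j
    exact (hcont j).integrableOn_Ioc
  have hnorm_le : ∀ j : ℕ, ∀ θ : ℝ, ‖F j θ‖ ≤ ‖a j‖ := by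
    intro j θ
    have h1 : ‖Complex.exp (-(k * θ * I))‖ = 1 := by
      rw [show -((k:ℂ) * θ * I) = ((-(k * θ) : ℝ) : ℂ) * I by push_cast; ring]
      exact Complex.norm_exp_ofReal_mul_I _
    have h2 : ‖Complex.cos (j * θ)‖ ≤ 1 := by
      rw [show ((j:ℂ) * θ) = (((j:ℝ) * θ : ℝ) : ℂ) by push_cast; ring, ← Complex.ofReal_cos]
      rw [Complex.norm_real, Real.norm_eq_abs]
      exact Real.abs_cos_le_one _
    have : ‖F j θ‖ = ‖a j‖ * ‖Complex.cos (j * θ)‖ *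
        ‖Complex.exp (-(k * θ * I))‖ := by
      simp [hF]
    rw [this, h1, mul_one]
    calc ‖a j‖ * ‖Complex.cos (j * θ)‖
        ≤ ‖a j‖ * 1 := by
          exact mul_le_mul_of_nonneg_left h2 (norm_nonneg _)
      _ = ‖a j‖ := mul_one _
  have hμfin : (μ Set.univ).toReal = 2 * π := by
    rw [hμ, Measure.restrict_apply_univ, Real.volume_Ioc, ENNReal.toReal_ofReal (by nlinarith [Real.pi_pos])]
    ring
  have hF_sum : Summable fun j => ∫ θ, ‖F j θ‖ ∂μ := by
    apply Summable.of_nonneg_of_le (fun j => integral_nonneg fun θ => norm_nonneg _)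
      (fun j => ?_) (habs.mul_left (2*π))
    calc (∫ θ, ‖F j θ‖ ∂μ) ≤ ∫ _θ, ‖a j‖ ∂μ :=
          integral_mono (hF_int j).norm (integrable_const _) (fun θ => hnorm_le j θ)
      _ = (μ Set.univ).toReal * ‖a j‖ := by rw [integral_const]; simp [Measure.real]
      _ = 2 * π * ‖a j‖ := by rw [hμfin]
  have key := hasSum_integral_of_summable_integral_norm hF_int hF_sum
  have htsum : ∀ θ : ℝ, (∑' j, F j θ) = f (Real.cos θ) * Complex.exp (-(k * θ * I)) := by
    intro θ
    exact ((hg θ).mul_right _).tsum_eq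
  simp only [htsum] at key
  have hterm : ∀ j : ℕ, (∫ θ, F j θ ∂μ) = a j * (if j = k then (π:ℂ) else 0) := by
    intro j
    have : (∫ θ, F j θ ∂μ) = ∫ θ in (0:ℝ)..(2*π), F j θ := by
      rw [intervalIntegral.integral_of_le (by positivity)]
    rw [this, hF]
    simp only [mul_assoc]
    rw [intervalIntegral.integral_const_mul]
    simp only [← mul_assoc]
    rw [term_integral j k hk]
  simp only [hterm] at key
  have key2 : HasSum (fun j => a j * (if j = k then (π:ℂ) else 0)) (a k * π) := by
    have : (fun j => a j * (if j = k then (π:ℂ) else 0))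
        = fun j => if j = k then a k * π else 0 := by
      funext j
      split_ifs with h
      · subst h; ring
      · ring
    rw [this]
    exact hasSum_ite_eq k (a k * π)
  have := key.unique key2
  rw [intervalIntegral.integral_of_le (by positivity : (0:ℝ) ≤ 2*π), ← hμ, this]
  ring

lemma circle_one (f : ℂ → ℂ) (k : ℕ) :
    (∮ z in C(0, (1:ℝ)), f ((z + z⁻¹)/2) * (z^(k+1))⁻¹)
      = I * ∫ θ : ℝ in (0:ℝ)..(2*π), f (Real.cos θ) * Complex.exp (-(k * θ * I)) := by
  rw [circleIntegral]
  have hpt : ∀ θ : ℝ, deriv (circleMap 0 1) θ •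
      (f ((circleMap 0 1 θ + (circleMap 0 1 θ)⁻¹)/2) * ((circleMap 0 1 θ)^(k+1))⁻¹)
      = I * (f (Real.cos θ) * Complex.exp (-(k * θ * I))) := by
    intro θ
    rw [deriv_circleMap]
    have hcm : circleMap 0 1 θ = Complex.exp (θ * I) := by simp [circleMap]
    rw [hcm, smul_eq_mul]
    have hinv : (Complex.exp (θ * I))⁻¹ = Complex.exp (-(θ * I)) := by
      rw [Complex.exp_neg]
    have hcos : (Complex.exp (θ * I) + (Complex.exp (θ * I))⁻¹)/2 = ((Real.cos θ : ℝ) : ℂ) := by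
      rw [hinv, Complex.ofReal_cos, Complex.cos]
      ring_nf
    have hpow : ((Complex.exp (θ * I))^(k+1))⁻¹ = Complex.exp (-(((k:ℂ)+1) * θ * I)) := by
      rw [← Complex.exp_nat_mul, Complex.exp_neg]
      push_cast
      ring_nf
    rw [hcos, hpow]
    rw [show Complex.exp (θ*I) * I * (f ((Real.cos θ : ℝ) : ℂ) * Complex.exp (-(((k:ℂ)+1) * θ * I)))
        = I * (f ((Real.cos θ : ℝ):ℂ) * (Complex.exp (θ*I) * Complex.exp (-(((k:ℂ)+1) * θ * I))))
        by ring]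
    rw [← Complex.exp_add]
    congr 2
    ring_nf

  calc (∫ θ : ℝ in (0:ℝ)..(2*π), deriv (circleMap 0 1) θ •
          (f (((circleMap 0 1) θ + ((circleMap 0 1) θ)⁻¹)/2) * (((circleMap 0 1) θ)^(k+1))⁻¹))
      = ∫ θ : ℝ in (0:ℝ)..(2*π), I * (f (Real.cos θ) * Complex.exp (-(k * θ * I))) := by
        apply intervalIntegral.integral_congr
        intro θ _
        exact hpt θ
    _ = I * ∫ θ : ℝ in (0:ℝ)..(2*π), f (Real.cos θ) * Complex.exp (-(k * θ * I)) :=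
        intervalIntegral.integral_const_mul _ _

end Aux

theorem chebyshev_coeff_decay (ρ : ℝ) (hρ : 1 < ρ) (f : ℂ → ℂ) (M : ℝ)
    (U : Set ℂ) (hU : IsOpen U) (hsub : bernsteinRegion ρ ⊆ U)
    (hf : DifferentiableOn ℂ f U)
    (hbound : ∀ z ∈ bernsteinRegion ρ, ‖f z‖ ≤ M)
    (a : ℕ → ℂ)
    (hsum : ∀ x : ℝ, x ∈ Set.Icc (-1 : ℝ) 1 →
      HasSum (fun k : ℕ => a k * (Polynomial.Chebyshev.T ℂ k).eval (x : ℂ)) (f x)) :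
    ∀ k : ℕ, 1 ≤ k → ‖a k‖ ≤ 2 * M * ρ ^ (-(k : ℤ)) := by
  intro k hk
  have hπ := Real.pi_pos
  have hρ0 : (0:ℝ) < ρ := by linarith
  -- `f` is bounded by `M ≥ 0`
  have hM : 0 ≤ M := by
    have h1 : (1:ℂ) ∈ bernsteinRegion ρ := ⟨1, 0, le_refl 1, hρ.le, by norm_num⟩
    exact le_trans (norm_nonneg _) (hbound 1 h1)
  -- the coefficients are absolutely summable
  have habs : Summable fun j => ‖a j‖ := by
    have h1 := hsum 1 ⟨by norm_num, le_refl 1⟩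
    have heval : ∀ j : ℕ, (Polynomial.Chebyshev.T ℂ j).eval (((1:ℝ)):ℂ) = 1 := by
      intro j
      have := Polynomial.Chebyshev.T_complex_cos (0:ℂ) (j:ℤ)
      simpa using this
    simp only [heval, mul_one] at h1
    have : Summable a := h1.summable
    have := summable_norm_iff.mpr this
    simpa using this
  -- the expansion written via cosines
  have hg : ∀ θ : ℝ, HasSum (fun j : ℕ => a j * Complex.cos (j * θ)) (f (Real.cos θ)) := by
    intro θ
    have h1 := hsum (Real.cos θ) ⟨Real.neg_one_le_cos θ, Real.cos_le_one θ⟩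
    have heval : ∀ j : ℕ, (Polynomial.Chebyshev.T ℂ j).eval ((Real.cos θ : ℝ):ℂ)
        = Complex.cos (j * θ) := by
      intro j
      rw [Complex.ofReal_cos, Polynomial.Chebyshev.T_complex_cos]
      push_cast
      ring_nf
    simpa only [heval] using h1
  -- value of the contour integral on the unit circle
  have hI1 : (∮ z in C(0, (1:ℝ)), f ((z + z⁻¹)/2) * (z^(k+1))⁻¹)
      = I * ((Real.pi : ℂ) * a k) := by
    rw [circle_one f k, coeff_integral f a habs hg k hk]
  -- the integrand is nice on the annulus
  have hmem : ∀ z : ℂ, z ∈ Metric.closedBall (0:ℂ) ρ \ Metric.ball (0:ℂ) 1 →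
      (z + z⁻¹)/2 ∈ bernsteinRegion ρ := by
    intro z hz
    obtain ⟨hz1, hz2⟩ := hz
    rw [Metric.mem_closedBall, dist_zero_right] at hz1
    rw [Metric.mem_ball, dist_zero_right, not_lt] at hz2
    exact joukowski_mem ρ z hz2 hz1
  have hzne : ∀ z : ℂ, z ∈ Metric.closedBall (0:ℂ) ρ \ Metric.ball (0:ℂ) 1 → z ≠ 0 := by
    intro z hz
    have := hz.2
    rw [Metric.mem_ball, dist_zero_right, not_lt] at this
    intro h
    rw [h] at this
    simp at this
    linarith
  -- equality of the two contour integrals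
  have heq : (∮ z in C(0, ρ), f ((z + z⁻¹)/2) * (z^(k+1))⁻¹)
      = ∮ z in C(0, (1:ℝ)), f ((z + z⁻¹)/2) * (z^(k+1))⁻¹ := by
    apply Complex.circleIntegral_eq_of_differentiable_on_annulus_off_countable
      one_pos hρ.le Set.countable_empty
    · intro z hz
      have hz0 := hzne z hz
      have hw := hsub (hmem z hz)
      have hdf : DifferentiableAt ℂ f ((z + z⁻¹)/2) := hf.differentiableAt (hU.mem_nhds hw)
      have hinner : ContinuousAt (fun z : ℂ => (z + z⁻¹)/2) z :=
        (continuousAt_id.add (continuousAt_inv₀ hz0)).div_const 2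
      have hc1 : ContinuousAt (fun z : ℂ => f ((z + z⁻¹)/2)) z :=
        ContinuousAt.comp (x := z) hdf.continuousAt hinner
      have hc2 : ContinuousAt (fun z : ℂ => (z^(k+1))⁻¹) z :=
        ((continuous_pow (k+1)).continuousAt).inv₀ (pow_ne_zero (k+1) hz0)
      exact (hc1.mul hc2).continuousWithinAt
    · intro z hz
      obtain ⟨hz', -⟩ := hz
      have hz'' : z ∈ Metric.closedBall (0:ℂ) ρ \ Metric.ball (0:ℂ) 1 :=
        ⟨Metric.ball_subset_closedBall hz'.1, fun h => hz'.2 (Metric.ball_subset_closedBall h)⟩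
      have hz0 := hzne z hz''
      have hw := hsub (hmem z hz'')
      have hdf : DifferentiableAt ℂ f ((z + z⁻¹)/2) := hf.differentiableAt (hU.mem_nhds hw)
      have hinner : DifferentiableAt ℂ (fun z : ℂ => (z + z⁻¹)/2) z :=
        (differentiableAt_id.add (differentiableAt_inv hz0)).div_const 2
      have hd1 : DifferentiableAt ℂ (fun z : ℂ => f ((z + z⁻¹)/2)) z :=
        DifferentiableAt.comp (x := z) hdf hinner
      have hd2 : DifferentiableAt ℂ (fun z : ℂ => (z^(k+1))⁻¹) z :=
        (differentiableAt_pow (k+1)).inv (pow_ne_zero (k+1) hz0)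
      exact hd1.mul hd2
  -- bound on the big circle
  have hb : ∀ z ∈ Metric.sphere (0:ℂ) ρ,
      ‖f ((z + z⁻¹)/2) * (z^(k+1))⁻¹‖ ≤ M * (ρ^(k+1))⁻¹ := by
    intro z hz
    rw [Metric.mem_sphere, dist_zero_right] at hz
    have habs_z : ‖z‖ = ρ := hz
    have hw : (z + z⁻¹)/2 ∈ bernsteinRegion ρ := joukowski_mem ρ z (by rw [habs_z]; linarith)
      (le_of_eq habs_z)
    rw [norm_mul, norm_inv, norm_pow, habs_z]
    exact mul_le_mul (hbound _ hw) (le_refl _) (by positivity) hM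
  have hbig : ‖(∮ z in C(0, ρ), f ((z + z⁻¹)/2) * (z^(k+1))⁻¹)‖
      ≤ 2 * Real.pi * ρ * (M * (ρ^(k+1))⁻¹) :=
    circleIntegral.norm_integral_le_of_norm_le_const hρ0.le hb
  rw [heq, hI1] at hbig
  have hlhs : ‖I * ((Real.pi:ℂ) * a k)‖ = Real.pi * ‖a k‖ := by
    rw [norm_mul, norm_mul, Complex.norm_I, Complex.norm_real, Real.norm_eq_abs,
      abs_of_pos hπ, one_mul]
  rw [hlhs] at hbig
  have hfinal : ‖a k‖ ≤ 2 * M * (ρ^k)⁻¹ := by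
    have h1 : 2 * Real.pi * ρ * (M * (ρ^(k+1))⁻¹) = Real.pi * (2 * M * (ρ^k)⁻¹) := by
      field_simp
      ring
    rw [h1] at hbig
    exact le_of_mul_le_mul_left hbig hπ
  rwa [zpow_neg, zpow_natCast]
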